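/- Let A be a (not necessarily unital) C*-algebra over ℂ. If I and J are closed two-sided ideals of A with I ∩ J = {0} and the closure of I + J equal to A, then J = ann(I) and ann(ann(I)) = I, where ann(I) = {a ∈ A : a x = 0 and x a = 0 for all x ∈ I}. -/

import Mathlib

/-- The annihilator of a subset of a ring:
`ann(I) = {a ∈ A : a x = 0 and x a = 0 for all x ∈ I}`. -/
def annSet {A : Type*} [NonUnitalRing A] (I : Set A) : Set A :=
  {a | ∀ x ∈ I, a * x = 0 ∧ x * a = 0}

section Aux

variable {A : Type*} [NonUnitalCStarAlgebra A]

private lemma core_approx (x : A) {ε : ℝ} (hε : 0 < ε) :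
    ‖x - cfcₙ (fun t : ℝ => t ^ 2 / (ε ^ 4 + t ^ 2)) (x * star x) * x‖ ≤ ε := by
  set g : ℝ → ℝ := fun t => t ^ 2 / (ε ^ 4 + t ^ 2) with hg_def
  have hden : ∀ t : ℝ, ε ^ 4 + t ^ 2 ≠ 0 := fun t => by positivity
  have hg : Continuous g := by
    apply Continuous.div (by fun_prop) (by fun_prop) hden
  have hg0 : g 0 = 0 := by simp [hg_def]
  set b : A := x * star x with hb_def
  have hb : IsSelfAdjoint b := IsSelfAdjoint.mul_star_self x
  set G : A := cfcₙ g b with hG_def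
  have hGsa : IsSelfAdjoint G := cfcₙ_predicate g b
  set d : A := x - G * x with hd_def
  have hstar : star d = star x - star x * G := by
    simp [hd_def, star_sub, star_mul, hGsa.star_eq]
  have hgc : ContinuousOn g (quasispectrum ℝ b) := hg.continuousOn
  have hidc : ContinuousOn (fun t : ℝ => t) (quasispectrum ℝ b) := continuousOn_id
  have key : d * star d = cfcₙ (fun t => (1 - g t) ^ 2 * t) b := by
    have h1 : b * G = cfcₙ (fun t => t * g t) b := by
      rw [cfcₙ_mul _ _ b hidc (by simp) hgc hg0, cfcₙ_id' ℝ b]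
    have h2 : G * b = cfcₙ (fun t => g t * t) b := by
      rw [cfcₙ_mul _ _ b hgc hg0 hidc (by simp), cfcₙ_id' ℝ b]
    have h3 : G * (b * G) = cfcₙ (fun t => g t * (t * g t)) b := by
      rw [cfcₙ_mul g (fun t => t * g t) b hgc hg0 (hidc.mul hgc) (by simp [hg0]), ← h1]
    have expand : d * star d = b - b * G - (G * b - G * (b * G)) := by
      rw [hd_def, hstar, hb_def]
      noncomm_ring
    have congr1 : cfcₙ (fun t => (1 - g t) ^ 2 * t) b
        = cfcₙ (fun t => (t - t * g t) - (g t * t - g t * (t * g t))) b :=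
      cfcₙ_congr fun t _ => by ring
    rw [expand, congr1,
      cfcₙ_sub (fun t => t - t * g t) (fun t => g t * t - g t * (t * g t)) b (hidc.sub (hidc.mul hgc)) (by simp)
        ((hgc.mul hidc).sub (hgc.mul (hidc.mul hgc))) (by simp [hg0]),
      cfcₙ_sub (fun t => t) (fun t => t * g t) b hidc (by simp) (hidc.mul hgc) (by simp),
      cfcₙ_sub (fun t => g t * t) (fun t => g t * (t * g t)) b (hgc.mul hidc) (by simp [hg0]) (hgc.mul (hidc.mul hgc)) (by simp [hg0]),
      cfcₙ_id' ℝ b, ← h1, ← h2, ← h3]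
  have hnorm : ‖d * star d‖ ≤ ε ^ 2 := by
    rw [key]
    apply norm_cfcₙ_le
    intro t ht
    have e1 : (1 - g t) ^ 2 * t = ε ^ 8 * t / (ε ^ 4 + t ^ 2) ^ 2 := by
      have hD := hden t
      simp only [hg_def]
      field_simp
      ring
    rw [Real.norm_eq_abs, e1, abs_div, abs_mul, abs_of_nonneg (by positivity : (0:ℝ) ≤ ε ^ 8),
      abs_of_nonneg (by positivity : (0:ℝ) ≤ (ε ^ 4 + t ^ 2) ^ 2),
      div_le_iff₀ (by positivity)]
    have h1t : 2 * ε ^ 2 * |t| ≤ ε ^ 4 + t ^ 2 := by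
      nlinarith [sq_nonneg (ε ^ 2 - |t|), sq_abs t]
    have h2t : (ε:ℝ) ^ 4 ≤ ε ^ 4 + t ^ 2 := by nlinarith [sq_nonneg t]
    have hp : (2 * ε ^ 2 * |t|) * ε ^ 4 ≤ (ε ^ 4 + t ^ 2) * (ε ^ 4 + t ^ 2) :=
      mul_le_mul h1t h2t (by positivity) (by positivity)
    nlinarith [mul_le_mul_of_nonneg_left hp (le_of_lt (pow_pos hε 2)),
      mul_nonneg (abs_nonneg t) (pow_pos hε 8).le]
  have h := CStarRing.norm_self_mul_star (x := d)
  nlinarith [norm_nonneg d]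

private lemma smul_mem_cIdeal (I : TwoSidedIdeal A) (hI : IsClosed (I : Set A)) (r : ℝ) {x : A}
    (hx : x ∈ I) : r • x ∈ I := by
  have h : r • x ∈ closure (I : Set A) := by
    rw [Metric.mem_closure_iff]
    intro ε hε
    have hδ : 0 < ε / (|r| + 1) := by positivity
    set δ := ε / (|r| + 1) with hδ_def
    refine ⟨r • (cfcₙ (fun t : ℝ => t ^ 2 / (δ ^ 4 + t ^ 2)) (x * star x) * x), ?_, ?_⟩
    · rw [← smul_mul_assoc]
      exact I.mul_mem_left _ _ hx
    · rw [dist_eq_norm, ← smul_sub, norm_smul, Real.norm_eq_abs]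
      calc |r| * ‖x - cfcₙ (fun t : ℝ => t ^ 2 / (δ ^ 4 + t ^ 2)) (x * star x) * x‖
          ≤ |r| * δ := by
            exact mul_le_mul_of_nonneg_left (core_approx x hδ) (abs_nonneg r)
        _ < ε := by
            rw [hδ_def]
            have : |r| / (|r| + 1) < 1 := by
              rw [div_lt_one (by positivity)]; linarith [abs_nonneg r]
            calc |r| * (ε / (|r| + 1)) = (|r| / (|r| + 1)) * ε := by ring
              _ < 1 * ε := by exact mul_lt_mul_of_pos_right this hε
              _ = ε := one_mul ε
  rwa [hI.closure_eq] at h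

lemma cfcₙ_mem_cIdeal (I : TwoSidedIdeal A) (hI : IsClosed (I : Set A)) {b : A}
    (hb : IsSelfAdjoint b) (hbI : b ∈ I) (f : ℝ → ℝ)
    (hf : ContinuousOn f (quasispectrum ℝ b)) (hf0 : f 0 = 0) :
    cfcₙ f b ∈ I := by
  let I' : NonUnitalSubalgebra ℝ A :=
    { carrier := I
      add_mem' := fun h1 h2 => I.add_mem h1 h2
      mul_mem' := fun {a c} _ h2 => I.mul_mem_left a c h2
      zero_mem' := I.zero_mem
      smul_mem' := fun r a ha => smul_mem_cIdeal I hI r ha }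
  have hadj : ∀ y ∈ NonUnitalStarAlgebra.adjoin ℝ ({b} : Set A), y ∈ I := by
    intro y hy
    have h1 : y ∈ (NonUnitalStarAlgebra.adjoin ℝ ({b} : Set A)).toNonUnitalSubalgebra := hy
    rw [NonUnitalStarAlgebra.adjoin_toNonUnitalSubalgebra] at h1
    have hle : NonUnitalAlgebra.adjoin ℝ (({b} : Set A) ∪ star ({b} : Set A)) ≤ I' := by
      apply NonUnitalAlgebra.adjoin_le
      simp only [Set.star_singleton, hb.star_eq, Set.union_self, Set.singleton_subset_iff]
      exact hbI
    exact hle h1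
  rw [cfcₙ_apply f b hf hf0]
  have hdense := ContinuousMapZero.adjoin_id_dense (quasispectrum ℝ b)
  have hcont := (cfcₙHom_isClosedEmbedding hb (R := ℝ)).continuous
  have hrange := hcont.range_subset_closure_image_dense hdense
    (Set.mem_range_self (⟨⟨_, hf.restrict⟩, hf0⟩ : ContinuousMapZero _ _))
  have hcomap : NonUnitalStarAlgebra.adjoin ℝ {(ContinuousMapZero.id (quasispectrum ℝ b) :
      ContinuousMapZero (quasispectrum ℝ b) ℝ)} ≤
      NonUnitalStarSubalgebra.comap (cfcₙHom hb) (NonUnitalStarAlgebra.adjoin ℝ {b}) := by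
    apply NonUnitalStarAlgebra.adjoin_le
    rw [Set.singleton_subset_iff, SetLike.mem_coe, NonUnitalStarSubalgebra.mem_comap]
    show cfcₙHom hb (ContinuousMapZero.id (quasispectrum ℝ b)) ∈ _
    rw [cfcₙHom_id hb]
    exact NonUnitalStarAlgebra.self_mem_adjoin_singleton ℝ b
  have hfin : (cfcₙHom hb) ⟨⟨_, hf.restrict⟩, hf0⟩ ∈ closure (I : Set A) := by
    refine closure_mono ?_ hrange
    rintro z ⟨p, hp, rfl⟩
    exact hadj _ (hcomap hp)
  rwa [hI.closure_eq] at hfin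

lemma star_mem_cIdeal (I : TwoSidedIdeal A) (hI : IsClosed (I : Set A)) {a : A}
    (ha : a ∈ I) : star a ∈ I := by
  have h : star a ∈ closure (I : Set A) := by
    rw [Metric.mem_closure_iff]
    intro ε hε
    have hε2 : 0 < ε / 2 := by positivity
    refine ⟨cfcₙ (fun t : ℝ => t ^ 2 / ((ε / 2) ^ 4 + t ^ 2)) (star a * star (star a)) * star a,
      ?_, ?_⟩
    · apply I.mul_mem_right
      apply cfcₙ_mem_cIdeal I hI ?_ ?_ _ ?_ (by simp)
      · rw [star_star]; exact IsSelfAdjoint.star_mul_self a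
      · rw [star_star]; exact I.mul_mem_left _ _ ha
      · apply Continuous.continuousOn
        exact Continuous.div (by fun_prop) (by fun_prop) (fun t => by positivity)
    · rw [dist_eq_norm]
      calc ‖star a - cfcₙ (fun t : ℝ => t ^ 2 / ((ε / 2) ^ 4 + t ^ 2))
            (star a * star (star a)) * star a‖ ≤ ε / 2 := core_approx (star a) hε2
        _ < ε := by linarith
  rwa [hI.closure_eq] at h

private lemma half_ann (I J : TwoSidedIdeal A)
    (hI : IsClosed (I : Set A)) (hJ : IsClosed (J : Set A))
    (hmeet : (I : Set A) ∩ (J : Set A) = {0})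
    (hjoin : closure {x : A | ∃ a ∈ I, ∃ b ∈ J, x = a + b} = Set.univ) :
    (J : Set A) = annSet (I : Set A) := by
  have hJann : (J : Set A) ⊆ annSet (I : Set A) := by
    intro j hj x hx
    constructor
    · have h1 : j * x ∈ (I : Set A) ∩ (J : Set A) :=
        ⟨I.mul_mem_left _ _ hx, J.mul_mem_right _ _ hj⟩
      rw [hmeet] at h1
      exact h1
    · have h1 : x * j ∈ (I : Set A) ∩ (J : Set A) :=
        ⟨I.mul_mem_right _ _ hx, J.mul_mem_left _ _ hj⟩
      rw [hmeet] at h1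
      exact h1
  refine Set.Subset.antisymm hJann ?_
  intro a ha
  have h : a ∈ closure (J : Set A) := by
    rw [Metric.mem_closure_iff]
    intro ε hε
    have hε2 : 0 < ε / 2 := by positivity
    have haS : a ∈ closure {x : A | ∃ a ∈ I, ∃ b ∈ J, x = a + b} := by
      rw [hjoin]; trivial
    rw [Metric.mem_closure_iff] at haS
    obtain ⟨y, ⟨i, hi, j, hj, rfl⟩, hy⟩ := haS (ε / 2) hε2
    refine ⟨j, hj, ?_⟩
    set c : A := a - j with hc_def
    have hcann : c ∈ annSet (I : Set A) := by
      intro x hx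
      have h1 := ha x hx
      have h2 := hJann hj x hx
      constructor
      · rw [hc_def, sub_mul, h1.1, h2.1, sub_zero]
      · rw [hc_def, mul_sub, h1.2, h2.2, sub_zero]
    have hci : ‖c - i‖ < ε / 2 := by
      have : c - i = a - (i + j) := by rw [hc_def]; abel
      rw [this, ← dist_eq_norm]
      exact hy
    have hkey : c * star (c - i) = c * star c := by
      have h0 : c * star i = 0 := (hcann (star i) (star_mem_cIdeal I hI hi)).1
      rw [star_sub, mul_sub, h0, sub_zero]
    have hnorm : ‖c‖ * ‖c‖ ≤ ‖c‖ * (ε / 2) := by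
      calc ‖c‖ * ‖c‖ = ‖c * star c‖ := (CStarRing.norm_self_mul_star).symm
        _ = ‖c * star (c - i)‖ := by rw [hkey]
        _ ≤ ‖c‖ * ‖star (c - i)‖ := norm_mul_le _ _
        _ = ‖c‖ * ‖c - i‖ := by rw [norm_star]
        _ ≤ ‖c‖ * (ε / 2) := mul_le_mul_of_nonneg_left hci.le (norm_nonneg c)
    have hc_small : ‖c‖ ≤ ε / 2 := by
      rcases eq_or_lt_of_le (norm_nonneg c) with h0 | h0
      · rw [← h0]; positivity
      · exact le_of_mul_le_mul_left (by linarith [hnorm]) h0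
    rw [dist_eq_norm]
    calc ‖a - j‖ = ‖c‖ := by rw [hc_def]
      _ ≤ ε / 2 := hc_small
      _ < ε := by linarith
  rwa [hJ.closure_eq] at h

end Aux

/-- In a (not necessarily unital) C*-algebra, if closed two-sided ideals
satisfy `I ∩ J = {0}` and `cl(I + J) = A`, then `J = ann(I)` and
`ann(ann(I)) = I`. -/
theorem cstar_complemented_closed_ideal_is_annihilator {A : Type*}
    [NonUnitalCStarAlgebra A]
    (I J : TwoSidedIdeal A)
    (hI : IsClosed (I : Set A)) (hJ : IsClosed (J : Set A))
    (hmeet : (I : Set A) ∩ (J : Set A) = {0})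
    (hjoin : closure {x : A | ∃ a ∈ I, ∃ b ∈ J, x = a + b} = Set.univ) :
    (J : Set A) = annSet (I : Set A) ∧
      annSet (annSet (I : Set A)) = (I : Set A) := by
  have h1 := half_ann I J hI hJ hmeet hjoin
  have hmeet' : (J : Set A) ∩ (I : Set A) = {0} := by rw [Set.inter_comm]; exact hmeet
  have hsets : {x : A | ∃ a ∈ J, ∃ b ∈ I, x = a + b} = {x : A | ∃ a ∈ I, ∃ b ∈ J, x = a + b} := by
    ext z
    constructor
    · rintro ⟨a, ha, b, hb, rfl⟩; exact ⟨b, hb, a, ha, add_comm a b⟩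
    · rintro ⟨a, ha, b, hb, rfl⟩; exact ⟨b, hb, a, ha, add_comm a b⟩
  have hjoin' : closure {x : A | ∃ a ∈ J, ∃ b ∈ I, x = a + b} = Set.univ := by
    rw [hsets, hjoin]
  have h2 := half_ann J I hJ hI hmeet' hjoin'
  exact ⟨h1, by rw [← h1, ← h2]⟩
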